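/- Let $y, y' \in \mathbb{R}_+^n$ be sorted in nondecreasing order, let $p$ be a permutation of $\{1,\dots,n\}$, and let $\delta > 0$. If $|y_k - y'_{p(k)}| < \delta$ for all $k = 1,\dots,n$, then $|y_k - y'_k| < \delta$ for all $k = 1,\dots,n$. -/

import Mathlib

lemma perm_exists_le_ge {n : ℕ} (p : Equiv.Perm (Fin n)) (k : Fin n) :
    ∃ i, i ≤ k ∧ k ≤ p i := by
  by_contra hc
  push_neg at hc
  have hcard := Finset.card_le_card_of_injOn (f := p) (s := Finset.Iic k)
    (t := Finset.Iio k)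
    (by intro i hi; simp only [Finset.mem_coe, Finset.mem_Iic] at hi; simp [hc i hi])
    (fun a _ b _ hab => p.injective hab)
  rw [Fin.card_Iic, Fin.card_Iio] at hcard
  omega

/-- Strict-inequality form of Lemma C: if a permuted matching of two sorted
nonnegative vectors is within `δ` coordinatewise, then so is the identity matching. -/
theorem sorted_matching_lt_delta {n : ℕ}
    (y y' : Fin n → ℝ)
    (hy0 : ∀ k, 0 ≤ y k) (hy'0 : ∀ k, 0 ≤ y' k)
    (hy : Monotone y) (hy' : Monotone y')
    (p : Equiv.Perm (Fin n)) (δ : ℝ) (hδ : 0 < δ)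
    (h : ∀ k, |y k - y' (p k)| < δ) :
    ∀ k, |y k - y' k| < δ := by
  intro k
  obtain ⟨i, hik, hki⟩ := perm_exists_le_ge p k
  obtain ⟨i', hik', hki'⟩ := perm_exists_le_ge p⁻¹ k
  set j := p⁻¹ i' with hj
  have hpj : p j = i' := by simp [hj]
  have h1 : y' k - y k < δ := by
    have := h i
    have h1 : y' k ≤ y' (p i) := hy' hki
    have h2 : y i ≤ y k := hy hik
    rw [abs_lt] at this
    linarith [this.1]
  have h2 : y k - y' k < δ := by
    have := h j
    have h1 : y k ≤ y j := hy hki'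
    have h2 : y' (p j) ≤ y' k := by rw [hpj]; exact hy' hik'
    rw [abs_lt] at this
    linarith [this.2]
  rw [abs_lt]; constructor <;> linarith
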